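/- Let H₁ be a finite bipartite graph with parts A₁ and B₁ (all edges between A₁ and B₁), let p, d be positive integers, let Λ_A be a family of functions from A₁ to [p] such that every p-element subset of A₁ is mapped injectively by some h ∈ Λ_A, and let Λ_B be a family of functions from B₁ to [d] such that every d-element subset of B₁ is mapped injectively by some h ∈ Λ_B. Define the bipartite graph H with parts A(H) = A₁ × Λ_A × Λ_B and B(H) = B₁ × Λ_A × Λ_B, where (u,h₁,h₂) is adjacent to (v,h₁',h₂') if and only if h₁ = h₁', h₂ = h₂', and u is adjacent to v in H₁; and define colorings α : A(H) → [p] by α(u,h₁,h₂) = h₁(u) and β : B(H) → [d] by β(v,h₁,h₂) = h₂(v). Then: (1) if some p-element subset of A₁ has at least d common neighbors in B₁, then there exist p vertices in A(H) with pairwise distinct α-colors having d common neighbors in B(H) with pairwise distinct β-colors; and (2) for every positive integer q and natural number m, if every q-element subset of A₁ has at most m common neighbors in B₁, then every q-element subset of A(H) has at most m common neighbors in B(H). -/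

import Mathlib

/-- color-coding product construction, Theorem 4.1.
Given a bipartite graph with parts `α`, `β` and edge relation `E`, and perfect
hash families `ΛA` (functions `α → Fin p`, indexed by `fA`) and `ΛB`
(functions `β → Fin d`, indexed by `fB`), form the bipartite graph `H` with
parts `α × ΛA × ΛB` and `β × ΛA × ΛB`, where `(u, h₁, h₂)` is adjacent to
`(v, h₁', h₂')` iff `h₁ = h₁'`, `h₂ = h₂'` and `E u v`, colored by
`α(u,h₁,h₂) = fA h₁ u` and `β(v,h₁,h₂) = fB h₂ v`.  Then:
(1) if some `p`-element subset of `α` has at least `d` common neighbors, then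
there are `p` vertices of pairwise distinct `α`-colors in `A(H)` having `d`
common neighbors of pairwise distinct `β`-colors in `B(H)`; and
(2) if every `q`-element subset of `α` has at most `m` common neighbors, then
every `q`-element subset of `A(H)` has at most `m` common neighbors. -/
theorem color_coding_product {α β ΛA ΛB : Type*}
    [Fintype α] [Fintype β] [Fintype ΛA] [Fintype ΛB]
    (E : α → β → Prop) (p d : ℕ) (hp : 0 < p) (hd : 0 < d)
    (fA : ΛA → α → Fin p) (fB : ΛB → β → Fin d)
    (hA : ∀ X : Finset α, X.card = p → ∃ l : ΛA, Set.InjOn (fA l) ↑X)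
    (hB : ∀ Y : Finset β, Y.card = d → ∃ l : ΛB, Set.InjOn (fB l) ↑Y) :
    ((∃ S : Finset α, S.card = p ∧ d ≤ {v : β | ∀ u ∈ S, E u v}.ncard) →
      ∃ S' : Finset (α × ΛA × ΛB), S'.card = p ∧
        Set.InjOn (fun a : α × ΛA × ΛB => fA a.2.1 a.1) ↑S' ∧
        ∃ T' : Finset (β × ΛA × ΛB), T'.card = d ∧
          Set.InjOn (fun b : β × ΛA × ΛB => fB b.2.2 b.1) ↑T' ∧
          ∀ a ∈ S', ∀ b ∈ T',
            a.2.1 = b.2.1 ∧ a.2.2 = b.2.2 ∧ E a.1 b.1)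
    ∧ (∀ q m : ℕ, 0 < q →
        (∀ S : Finset α, S.card = q → {v : β | ∀ u ∈ S, E u v}.ncard ≤ m) →
        ∀ S' : Finset (α × ΛA × ΛB), S'.card = q →
          {b : β × ΛA × ΛB |
            ∀ a ∈ S', a.2.1 = b.2.1 ∧ a.2.2 = b.2.2 ∧ E a.1 b.1}.ncard ≤ m) := by

  classical
  constructor
  · rintro ⟨S, hScard, hSd⟩
    obtain ⟨l₁, hl₁⟩ := hA S hScard
    set N : Set β := {v : β | ∀ u ∈ S, E u v} with hN
    have hNfin : N.Finite := Set.toFinite _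
    have hle : d ≤ hNfin.toFinset.card := by
      rwa [Set.ncard_eq_toFinset_card N hNfin] at hSd
    obtain ⟨T, hTsub, hTcard⟩ := Finset.exists_subset_card_eq hle
    obtain ⟨l₂, hl₂⟩ := hB T hTcard
    refine ⟨S.image (fun u => (u, l₁, l₂)), ?_, ?_,
      T.image (fun v => (v, l₁, l₂)), ?_, ?_, ?_⟩
    · rw [Finset.card_image_of_injective _ (by intro a b h; simpa using h)]
      exact hScard
    · intro a ha b hb hab
      simp only [Finset.coe_image, Set.mem_image] at ha hb
      obtain ⟨u, hu, rfl⟩ := ha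
      obtain ⟨v, hv, rfl⟩ := hb
      simp only at hab
      have := hl₁ hu hv hab
      simp [this]
    · rw [Finset.card_image_of_injective _ (by intro a b h; simpa using h)]
      exact hTcard
    · intro a ha b hb hab
      simp only [Finset.coe_image, Set.mem_image] at ha hb
      obtain ⟨u, hu, rfl⟩ := ha
      obtain ⟨v, hv, rfl⟩ := hb
      simp only at hab
      have := hl₂ hu hv hab
      simp [this]
    · intro a ha b hb
      simp only [Finset.mem_image] at ha hb
      obtain ⟨u, hu, rfl⟩ := ha
      obtain ⟨v, hv, rfl⟩ := hb
      refine ⟨rfl, rfl, ?_⟩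
      have : v ∈ N := by
        have := hTsub hv
        exact hNfin.mem_toFinset.mp this
      exact this u hu
  · intro q m hq hm S' hS'card
    set M : Set (β × ΛA × ΛB) :=
      {b : β × ΛA × ΛB | ∀ a ∈ S', a.2.1 = b.2.1 ∧ a.2.2 = b.2.2 ∧ E a.1 b.1}
    rcases Set.eq_empty_or_nonempty M with hMe | ⟨b₀, hb₀⟩
    · simp [hMe]
    · have hS'ne : S'.Nonempty := Finset.card_pos.mp (hS'card ▸ hq)
      obtain ⟨a₀, ha₀⟩ := hS'ne
      -- all elements of S' have second component equal to b₀.2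
      have hsnd : ∀ a ∈ S', a.2 = b₀.2 := by
        intro a ha
        obtain ⟨h1, h2, _⟩ := hb₀ a ha
        exact Prod.ext h1 h2
      have hsndM : ∀ b ∈ M, b.2 = b₀.2 := by
        intro b hb
        obtain ⟨h1, h2, _⟩ := hb a₀ ha₀
        obtain ⟨h1', h2', _⟩ := hb₀ a₀ ha₀
        exact Prod.ext (h1 ▸ h1' ▸ rfl) (h2 ▸ h2' ▸ rfl)
      set S : Finset α := S'.image Prod.fst with hS
      have hScard : S.card = q := by
        rw [hS, Finset.card_image_of_injOn, hS'card]
        intro a ha b hb hab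
        exact Prod.ext hab (by rw [hsnd a ha, hsnd b hb])
      have hinj : Set.InjOn Prod.fst M := by
        intro b hb c hc hbc
        exact Prod.ext hbc (by rw [hsndM b hb, hsndM c hc])
      have hsub : Prod.fst '' M ⊆ {v : β | ∀ u ∈ S, E u v} := by
        rintro v ⟨b, hb, rfl⟩ u hu
        simp only [hS, Finset.mem_image] at hu
        obtain ⟨a, ha, rfl⟩ := hu
        exact (hb a ha).2.2
      calc M.ncard = (Prod.fst '' M).ncard := (Set.ncard_image_of_injOn hinj).symm
        _ ≤ {v : β | ∀ u ∈ S, E u v}.ncard :=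
            Set.ncard_le_ncard hsub (Set.toFinite _)
        _ ≤ m := hm S hScard
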